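/- Let q be a prime power, A an (n-1)×n matrix over F_{q^2} of rank n-1. The system A x^T = 0 has a nonzero solution in F_q^n if and only if A^{(q)} and A are row equivalent, where A^{(q)} is obtained from A by raising every entry to its q-th power. -/

import Mathlib

open Matrix Submodule

/-- The `q`-power map is a ring hom and an involution when `|F| = q²`. -/
lemma aux_qpow_hom {F : Type*} [Field F] [Fintype F] {q : ℕ} (hF : Fintype.card F = q ^ 2) :
    ∃ f : F →+* F, (∀ x, f x = x ^ q) ∧ Function.Involutive f := by
  set p := ringChar F with hpdef
  have hp : p.Prime := CharP.char_is_prime F p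
  obtain ⟨m, -, hm⟩ := FiniteField.card F p
  have hdvd : q ∣ p ^ (m : ℕ) := ⟨q, by rw [← hm, hF, sq]⟩
  obtain ⟨s, -, rfl⟩ := (Nat.dvd_prime_pow hp).mp hdvd
  haveI : ExpChar F p := ExpChar.prime hp
  refine ⟨iterateFrobenius F p s, fun x => iterateFrobenius_def .., fun x => ?_⟩
  have : (x ^ p ^ s) ^ p ^ s = x ^ Fintype.card F := by
    rw [← pow_mul, hF, sq]
  simp only [iterateFrobenius_def, this, FiniteField.pow_card]

/-- Solvability of `l ^ (q-1) * c = 1` when `c ^ (q+1) = 1`, via cyclicity of `Fˣ`. -/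
lemma aux_exists_lam {F : Type*} [Field F] [Fintype F] {q : ℕ} (hF : Fintype.card F = q ^ 2)
    (hq : 2 ≤ q) {c : F} (hc : c ^ (q + 1) = 1) : ∃ l : F, l ≠ 0 ∧ l ^ (q - 1) * c = 1 := by
  classical
  have hc0 : c ≠ 0 := by
    intro h; rw [h, zero_pow (by omega)] at hc; exact zero_ne_one hc
  let u : Fˣ := Units.mk0 c⁻¹ (inv_ne_zero hc0)
  obtain ⟨g, hg⟩ := IsCyclic.exists_generator (α := Fˣ)
  have hord : orderOf g = q ^ 2 - 1 := by
    rw [orderOf_eq_card_of_forall_mem_zpowers hg, Nat.card_eq_fintype_card,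
      Fintype.card_units, hF]
  obtain ⟨k, hk⟩ : ∃ k : ℕ, g ^ k = u := mem_powers_iff_mem_zpowers.mpr (hg u)
  have hu : u ^ (q + 1) = 1 := by
    ext
    simp only [u, Units.val_pow_eq_pow_val, Units.val_mk0, Units.val_one, inv_pow, hc, inv_one]
  have hdvd : q ^ 2 - 1 ∣ k * (q + 1) := by
    rw [← hord]
    apply orderOf_dvd_of_pow_eq_one
    rw [pow_mul, hk, hu]
  have hfac : q ^ 2 - 1 = (q - 1) * (q + 1) := by
    have : q ^ 2 = (q - 1) * (q + 1) + 1 := by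
      obtain ⟨r, rfl⟩ : ∃ r, q = r + 2 := ⟨q - 2, by omega⟩
      have : (r + 2) ^ 2 = (r + 1) * (r + 3) + 1 := by ring
      simpa using this
    omega
  rw [hfac] at hdvd
  obtain ⟨t, ht⟩ := (Nat.mul_dvd_mul_iff_right (show 0 < q + 1 by omega)).mp hdvd
  refine ⟨(g : F) ^ t, pow_ne_zero _ (Units.ne_zero g), ?_⟩
  have hl : (g ^ t) ^ (q - 1) = u := by rw [← pow_mul, mul_comm, ← ht, hk]
  have : ((g : F) ^ t) ^ (q - 1) = c⁻¹ := by
    have := congrArg (Units.val) hl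
    push_cast at this
    simpa [u] using this
  rw [this, inv_mul_cancel₀ hc0]

/-- Membership in the kernel of `mulVec` is orthogonality to the row span. -/
lemma aux_mulVec_zero_iff {F : Type*} [Field F] {m n : ℕ} (B : Matrix (Fin m) (Fin n) F)
    (x : Fin n → F) :
    B.mulVec x = 0 ↔ ∀ y ∈ span F (Set.range fun i => B i), y ⬝ᵥ x = 0 := by
  let D : (Fin n → F) →ₗ[F] F :=
    { toFun := fun y => y ⬝ᵥ x
      map_add' := fun a b => add_dotProduct a b x
      map_smul' := fun r a => smul_dotProduct r a x }
  constructor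
  · intro h y hy
    have hle : span F (Set.range fun i => B i) ≤ LinearMap.ker D := by
      rw [span_le]
      rintro - ⟨i, rfl⟩
      simpa [D, Matrix.mulVec] using congrFun h i
    exact hle hy
  · intro h
    funext i
    simpa [Matrix.mulVec] using h (B i) (subset_span ⟨i, rfl⟩)

theorem stmt1 {F : Type*} [Field F] [Fintype F] (q n : ℕ) (hF : Fintype.card F = q ^ 2)
    (hn : 0 < n) (A : Matrix (Fin (n - 1)) (Fin n) F) (hA : A.rank = n - 1) :
    (∃ x : Fin n → F, x ≠ 0 ∧ A.mulVec x = 0 ∧ ∀ i, (x i) ^ q = x i) ↔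
      Submodule.span F (Set.range fun j => (A.map (· ^ q)) j) =
        Submodule.span F (Set.range fun j => A j) := by
  classical
  obtain ⟨f, hf, hinv⟩ := aux_qpow_hom hF
  have hq : 2 ≤ q := by
    have h2 : 2 ≤ Fintype.card F := Fintype.one_lt_card
    rw [hF] at h2; nlinarith
  haveI : RingHomSurjective f := ⟨hinv.surjective⟩
  -- the entrywise Frobenius as a semilinear map
  let ψ : (Fin n → F) →ₛₗ[f] (Fin n → F) :=
    { toFun := fun v j => f (v j)
      map_add' := fun a b => by funext j; simp
      map_smul' := fun r a => by funext j; simp [Pi.smul_apply, smul_eq_mul] }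
  have hAq_rows : ∀ i, (A.map (· ^ q)) i = ψ (A i) := by
    intro i; funext k; simp [ψ, Matrix.map_apply, hf]
  have hrange : (Set.range fun j => (A.map (· ^ q)) j) = ψ '' Set.range (fun j => A j) := by
    rw [← Set.range_comp]
    exact congrArg Set.range (funext fun j => hAq_rows j)
  have hfinpi : Module.finrank F (Fin n → F) = n := by simp
  constructor
  · rintro ⟨x, hx0, hAx, hxq⟩
    obtain ⟨i0, hi0⟩ : ∃ i, x i ≠ 0 := by
      by_contra h; push_neg at h; exact hx0 (funext h)
    let D : (Fin n → F) →ₗ[F] F :=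
      { toFun := fun y => y ⬝ᵥ x
        map_add' := fun a b => add_dotProduct a b x
        map_smul' := fun r a => smul_dotProduct r a x }
    have hDsurj : LinearMap.range D = ⊤ := by
      rw [LinearMap.range_eq_top]
      intro r
      refine ⟨r • (Pi.single i0 (x i0)⁻¹ : Fin n → F), ?_⟩
      simp [D, smul_dotProduct, single_dotProduct, inv_mul_cancel₀ hi0, smul_eq_mul]
    have hkerD : Module.finrank F (LinearMap.ker D) = n - 1 := by
      have := D.finrank_range_add_finrank_ker
      rw [hDsurj, finrank_top, Module.finrank_self, hfinpi] at this
      omega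
    have hDψ : ∀ y, D (ψ y) = f (D y) := by
      intro y
      have hx' : ∀ j, f (x j) = x j := fun j => by rw [hf]; exact hxq j
      change (fun j => f (y j)) ⬝ᵥ x = f (y ⬝ᵥ x)
      simp only [dotProduct, map_sum, _root_.map_mul]
      exact Finset.sum_congr rfl fun j _ => by rw [hx' j]
    have hrowA : span F (Set.range fun j => A j) = LinearMap.ker D := by
      have hle : span F (Set.range fun j => A j) ≤ LinearMap.ker D := by
        rw [span_le]
        rintro - ⟨i, rfl⟩
        simpa [D, Matrix.mulVec] using congrFun hAx i
      refine Submodule.eq_of_le_of_finrank_le hle ?_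
      rw [hkerD]
      have : Aᵀ.rank = Module.finrank F (span F (Set.range fun j => A j)) := by
        rw [Matrix.rank, Matrix.range_mulVecLin]; rfl
      rw [← this, Matrix.rank_transpose, hA]
    have hmap : Submodule.map ψ (LinearMap.ker D) = LinearMap.ker D := by
      ext z
      simp only [Submodule.mem_map, LinearMap.mem_ker]
      constructor
      · rintro ⟨y, hy, rfl⟩
        rw [hDψ, hy, map_zero]
      · intro hz
        refine ⟨ψ z, ?_, ?_⟩
        · rw [hDψ, hz, map_zero]
        · funext j; exact hinv (z j)
    rw [hrange, ← Submodule.map_span, hrowA, hmap]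
  · intro hspan
    -- kernel of A has dimension 1
    have hker1 : Module.finrank F (LinearMap.ker A.mulVecLin) = 1 := by
      have := A.mulVecLin.finrank_range_add_finrank_ker
      rw [hfinpi] at this
      have hr : Module.finrank F (LinearMap.range A.mulVecLin) = n - 1 := hA
      omega
    obtain ⟨v, hv, hv0⟩ : ∃ v, v ∈ LinearMap.ker A.mulVecLin ∧ v ≠ 0 := by
      by_contra h
      push_neg at h
      have : LinearMap.ker A.mulVecLin = ⊥ := by
        rw [eq_bot_iff]; intro v hvmem; by_contra hne
        exact hne ((Submodule.mem_bot F).mpr (by by_contra h2; exact h2 (h v hvmem)))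
      rw [this, finrank_bot] at hker1
      omega
    have hvker : A.mulVec v = 0 := hv
    have hspanv : span F {v} = LinearMap.ker A.mulVecLin := by
      refine Submodule.eq_of_le_of_finrank_le ((span_singleton_le_iff_mem v _).mpr hv) ?_
      rw [hker1, finrank_span_singleton hv0]
    -- the Frobenius image of v is in the kernel of A
    have hψv : A.mulVec (fun j => f (v j)) = 0 := by
      have h1 : (A.map (· ^ q)).mulVec (fun j => f (v j)) = 0 := by
        funext i
        have heq : (A.map (· ^ q)) i ⬝ᵥ (fun j => f (v j)) = f (A i ⬝ᵥ v) := by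
          simp only [dotProduct, map_sum, _root_.map_mul, Matrix.map_apply, ← hf]
        have h2 := congrFun hvker i
        simp only [Matrix.mulVec, Pi.zero_apply] at h2 ⊢
        rw [heq, h2, map_zero]
      rw [aux_mulVec_zero_iff] at h1 ⊢
      rw [← hspan]
      exact h1
    obtain ⟨c, hc⟩ : ∃ c : F, c • v = (fun j => f (v j)) := by
      have : (fun j => f (v j)) ∈ span F {v} := by
        rw [hspanv]; exact hψv
      exact Submodule.mem_span_singleton.mp this
    have hcv : ∀ j, (v j) ^ q = c * v j := by
      intro j
      have := congrFun hc j
      simp only [Pi.smul_apply, smul_eq_mul] at this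
      rw [← hf]; exact this.symm
    obtain ⟨i0, hi0⟩ : ∃ i, v i ≠ 0 := by
      by_contra h; push_neg at h; exact hv0 (funext h)
    have hcq : c ^ (q + 1) = 1 := by
      have h1 : (v i0) ^ (q ^ 2) = v i0 := by rw [← hF, FiniteField.pow_card]
      have h2 : (v i0) ^ (q ^ 2) = c ^ (q + 1) * v i0 := by
        rw [sq, pow_mul, hcv i0, mul_pow, hcv i0]
        ring
      have h3 : c ^ (q + 1) * v i0 = 1 * v i0 := by rw [one_mul, ← h2, h1]
      exact mul_right_cancel₀ hi0 h3
    obtain ⟨l, hl0, hl⟩ := aux_exists_lam hF hq hcq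
    refine ⟨l • v, smul_ne_zero hl0 hv0, ?_, ?_⟩
    · rw [Matrix.mulVec_smul, hvker, smul_zero]
    · intro i
      simp only [Pi.smul_apply, smul_eq_mul, mul_pow, hcv i]
      have : l ^ q = l ^ (q - 1) * l := by
        conv_lhs => rw [show q = (q - 1) + 1 by omega]
        rw [pow_succ]
      rw [this]
      calc l ^ (q - 1) * l * (c * v i) = (l ^ (q - 1) * c) * (l * v i) := by ring
        _ = l * v i := by rw [hl, one_mul]
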